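/- If R = A × B is a 0-monochromatic rectangle in the matrix of the inner product function IP over GF(2)ⁿ (i.e., ⟨a,b⟩ = 0 for all a ∈ A, b ∈ B), then |R| = |A|·|B| ≤ 2ⁿ. -/

import Mathlib

open LinearMap Module

/-- The standard dot-product bilinear form on `Fin n → ZMod 2`. -/
noncomputable def ipForm (n : ℕ) : LinearMap.BilinForm (ZMod 2) (Fin n → ZMod 2) :=
  LinearMap.mk₂ (ZMod 2) (fun x y => ∑ i, x i * y i)
    (by intros; simp [add_mul, Finset.sum_add_distrib])
    (by intros; simp [Finset.mul_sum, mul_assoc, mul_comm, mul_left_comm])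
    (by intros; simp [mul_add, Finset.sum_add_distrib])
    (by intros; simp [Finset.mul_sum, mul_assoc, mul_comm, mul_left_comm])

lemma ipForm_apply (n : ℕ) (x y : Fin n → ZMod 2) :
    ipForm n x y = ∑ i, x i * y i := rfl

lemma ipForm_refl (n : ℕ) : (ipForm n).IsRefl := by
  intro x y h
  simpa [ipForm_apply, mul_comm] using h

lemma ipForm_nondeg (n : ℕ) : (ipForm n).Nondegenerate := by
  apply (LinearMap.IsRefl.nondegenerate_iff_separatingLeft (B := ipForm n) (ipForm_refl n)).mpr
  intro x hx
  funext i
  have := hx (Pi.single i 1)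
  simpa [ipForm_apply, Finset.sum_eq_single i, Pi.single_apply] using this

lemma card_le_of_subset_submodule {n : ℕ} (A : Finset (Fin n → ZMod 2))
    (W : Submodule (ZMod 2) (Fin n → ZMod 2)) (h : ∀ a ∈ A, a ∈ W) :
    A.card ≤ 2 ^ finrank (ZMod 2) W := by
  haveI : Fintype ↥W := Fintype.ofFinite _
  have hsub : A ⊆ Set.toFinset (W : Set _) := fun a ha => Set.mem_toFinset.mpr (h a ha)
  calc A.card ≤ (Set.toFinset (W : Set _)).card := Finset.card_le_card hsub
    _ = Fintype.card W := Set.toFinset_card _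
    _ = 2 ^ finrank (ZMod 2) W := by
        rw [card_eq_pow_finrank (K := ZMod 2)]; simp

/-- A 0-monochromatic rectangle for the inner product over `GF(2)ⁿ` has size at most `2ⁿ`. -/
theorem zero_rectangle_IP_bound (n : ℕ)
    (A B : Finset (Fin n → ZMod 2))
    (h : ∀ a ∈ A, ∀ b ∈ B, ∑ i, a i * b i = 0) :
    A.card * B.card ≤ 2 ^ n := by
  set W : Submodule (ZMod 2) (Fin n → ZMod 2) := Submodule.span (ZMod 2) (B : Set _) with hW
  have hB : B.card ≤ 2 ^ finrank (ZMod 2) W :=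
    card_le_of_subset_submodule B W (fun b hb => Submodule.subset_span hb)
  have hA : A.card ≤ 2 ^ finrank (ZMod 2) ((ipForm n).orthogonal W) := by
    apply card_le_of_subset_submodule
    intro a ha
    rw [LinearMap.BilinForm.mem_orthogonal_iff]
    intro m hm
    induction hm using Submodule.span_induction with
    | mem b hb => simpa [LinearMap.BilinForm.IsOrtho, ipForm_apply, mul_comm] using h a ha b hb
    | zero => simp [LinearMap.BilinForm.IsOrtho]
    | add x y hx hy ihx ihy => simp_all [LinearMap.BilinForm.IsOrtho]
    | smul c x hx ih => simp_all [LinearMap.BilinForm.IsOrtho]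
  have hdim : finrank (ZMod 2) ((ipForm n).orthogonal W) =
      n - finrank (ZMod 2) W := by
    rw [LinearMap.BilinForm.finrank_orthogonal (ipForm_nondeg n)]
    simp
  have hle : finrank (ZMod 2) W ≤ n := by
    have := Submodule.finrank_le W
    simpa using this
  calc A.card * B.card ≤ 2 ^ (n - finrank (ZMod 2) W) * 2 ^ finrank (ZMod 2) W := by
        exact Nat.mul_le_mul (hdim ▸ hA) hB
    _ = 2 ^ n := by rw [← pow_add, Nat.sub_add_cancel hle]
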